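/- Let e_1, …, e_5 be pairwise distinct complex numbers, λ_k the coefficients of 4∏_{m=1}^{5}(x−e_m), and F the associated Kleinian 2-polar for g = 2. Fix distinct indices i, j and let {p,q,r} = {1,…,5} \ {i,j}. Define p_{22} = e_i + e_j, p_{12} = −e_i e_j, and p_{11} = e_i e_j (e_p+e_q+e_r) + e_p e_q e_r. Then p_{11} + p_{12}(e_i+e_j) + p_{22} e_i e_j = F(e_i,e_j)/(4(e_i−e_j)²). -/

import Mathlib

open Finset Polynomial

theorem stmt_3 (e : Fin 5 → ℂ) (he : Function.Injective e)
    (lam : ℕ → ℂ)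
    (hlam : ∀ k, lam k = (4 * ∏ m, (X - C (e m)) : Polynomial ℂ).coeff k)
    (F : ℂ → ℂ → ℂ)
    (hF : ∀ x z, F x z = ∑ k ∈ range 3, x^k * z^k * (2 * lam (2*k) + lam (2*k+1) * (z + x)))
    (i j p q r : Fin 5) (hij : i ≠ j)
    (hpqr : ({p, q, r} : Finset (Fin 5)) = Finset.univ \ {i, j}) :
    (e i * e j * (e p + e q + e r) + e p * e q * e r)
      + (-(e i * e j)) * (e i + e j) + (e i + e j) * (e i * e j)
      = F (e i) (e j) / (4 * (e i - e j)^2) := by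
  have hij' : e i ≠ e j := fun h => hij (he h)
  have hpmem : p ∈ Finset.univ \ ({i, j} : Finset (Fin 5)) := by rw [← hpqr]; simp
  have hqmem : q ∈ Finset.univ \ ({i, j} : Finset (Fin 5)) := by rw [← hpqr]; simp
  have hrmem : r ∈ Finset.univ \ ({i, j} : Finset (Fin 5)) := by rw [← hpqr]; simp
  simp only [Finset.mem_sdiff, Finset.mem_insert, Finset.mem_singleton] at hpmem hqmem hrmem
  have hpi : p ≠ i := fun h => hpmem.2 (Or.inl h)
  have hpj : p ≠ j := fun h => hpmem.2 (Or.inr h)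
  have hqi : q ≠ i := fun h => hqmem.2 (Or.inl h)
  have hqj : q ≠ j := fun h => hqmem.2 (Or.inr h)
  have hri : r ≠ i := fun h => hrmem.2 (Or.inl h)
  have hrj : r ≠ j := fun h => hrmem.2 (Or.inr h)
  have hcard : ({p, q, r} : Finset (Fin 5)).card = 3 := by
    rw [hpqr, Finset.card_sdiff_of_subset (by simp)]
    rw [Finset.card_insert_of_notMem (by simpa using hij)]
    simp
  have pairle : ∀ x y : Fin 5, ({x, y} : Finset (Fin 5)).card ≤ 2 := by
    intro x y
    calc ({x, y} : Finset (Fin 5)).card ≤ ({y} : Finset (Fin 5)).card + 1 :=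
          Finset.card_insert_le _ _
      _ = 2 := by simp
  have hpq : p ≠ q := by
    intro h
    have hs : ({p, q, r} : Finset (Fin 5)) ⊆ {q, r} := by
      intro x hx
      simp only [Finset.mem_insert, Finset.mem_singleton] at hx ⊢
      rcases hx with rfl | rfl | rfl
      exacts [Or.inl h, Or.inl rfl, Or.inr rfl]
    have := (Finset.card_le_card hs).trans (pairle q r)
    omega
  have hpr : p ≠ r := by
    intro h
    have hs : ({p, q, r} : Finset (Fin 5)) ⊆ {q, r} := by
      intro x hx
      simp only [Finset.mem_insert, Finset.mem_singleton] at hx ⊢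
      rcases hx with rfl | rfl | rfl
      exacts [Or.inr h, Or.inl rfl, Or.inr rfl]
    have := (Finset.card_le_card hs).trans (pairle q r)
    omega
  have hqr : q ≠ r := by
    intro h
    have hs : ({p, q, r} : Finset (Fin 5)) ⊆ {p, r} := by
      intro x hx
      simp only [Finset.mem_insert, Finset.mem_singleton] at hx ⊢
      rcases hx with rfl | rfl | rfl
      exacts [Or.inl rfl, Or.inr h, Or.inr rfl]
    have := (Finset.card_le_card hs).trans (pairle p r)
    omega
  have huniv : (Finset.univ : Finset (Fin 5)) = {i, j, p, q, r} := by
    ext x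
    simp only [Finset.mem_univ, true_iff, Finset.mem_insert, Finset.mem_singleton]
    by_cases hxi : x = i; · tauto
    by_cases hxj : x = j; · tauto
    have : x ∈ Finset.univ \ ({i, j} : Finset (Fin 5)) := by simp [hxi, hxj]
    rw [← hpqr] at this
    simp at this
    tauto
  have hprod : (∏ m, (X - C (e m)) : Polynomial ℂ)
      = (X - C (e i)) * ((X - C (e j)) * ((X - C (e p)) * ((X - C (e q)) * (X - C (e r))))) := by
    rw [huniv]
    rw [Finset.prod_insert (by simp [hij, hpi.symm, hqi.symm, hri.symm]),
        Finset.prod_insert (by simp [hpj.symm, hqj.symm, hrj.symm]),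
        Finset.prod_insert (by simp [hpq, hpr]),
        Finset.prod_insert (by simp [hqr]),
        Finset.prod_singleton]
  set a := e i; set b := e j; set c := e p; set d := e q; set f := e r
  have hexp : (∏ m, (X - C (e m)) : Polynomial ℂ)
      = X^5 - C (a+b+c+d+f) * X^4 + C (a*b+a*c+a*d+a*f+b*c+b*d+b*f+c*d+c*f+d*f) * X^3
        - C (a*b*c+a*b*d+a*b*f+a*c*d+a*c*f+a*d*f+b*c*d+b*c*f+b*d*f+c*d*f) * X^2
        + C (a*b*c*d+a*b*c*f+a*b*d*f+a*c*d*f+b*c*d*f) * X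
        - C (a*b*c*d*f) := by
    rw [hprod]
    simp only [map_add, map_mul]
    ring
  have hl : ∀ k, lam k = 4 * ((∏ m, (X - C (e m)) : Polynomial ℂ).coeff k) := by
    intro k
    rw [hlam k, show (4 : Polynomial ℂ) = C 4 from (map_ofNat (C : ℂ →+* Polynomial ℂ) 4).symm,
      Polynomial.coeff_C_mul]
  have hc : ∀ k, lam k = 4 * ((X^5 - C (a+b+c+d+f) * X^4
        + C (a*b+a*c+a*d+a*f+b*c+b*d+b*f+c*d+c*f+d*f) * X^3
        - C (a*b*c+a*b*d+a*b*f+a*c*d+a*c*f+a*d*f+b*c*d+b*c*f+b*d*f+c*d*f) * X^2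
        + C (a*b*c*d+a*b*c*f+a*b*d*f+a*c*d*f+b*c*d*f) * X
        - C (a*b*c*d*f) : Polynomial ℂ).coeff k) := by
    intro k; rw [hl, hexp]
  have hl0 : lam 0 = 4 * (-(a*b*c*d*f)) := by
    rw [hc]
    simp only [Polynomial.coeff_add, Polynomial.coeff_sub, Polynomial.coeff_C_mul,
      Polynomial.coeff_X_pow, Polynomial.coeff_C, Polynomial.coeff_X]
    norm_num
  have hl1 : lam 1 = 4 * (a*b*c*d+a*b*c*f+a*b*d*f+a*c*d*f+b*c*d*f) := by
    rw [hc]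
    simp only [Polynomial.coeff_add, Polynomial.coeff_sub, Polynomial.coeff_C_mul,
      Polynomial.coeff_X_pow, Polynomial.coeff_C, Polynomial.coeff_X]
    norm_num
  have hl2 : lam 2 = 4 * (-(a*b*c+a*b*d+a*b*f+a*c*d+a*c*f+a*d*f+b*c*d+b*c*f+b*d*f+c*d*f)) := by
    rw [hc]
    simp only [Polynomial.coeff_add, Polynomial.coeff_sub, Polynomial.coeff_C_mul,
      Polynomial.coeff_X_pow, Polynomial.coeff_C, Polynomial.coeff_X]
    norm_num
  have hl3 : lam 3 = 4 * (a*b+a*c+a*d+a*f+b*c+b*d+b*f+c*d+c*f+d*f) := by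
    rw [hc]
    simp only [Polynomial.coeff_add, Polynomial.coeff_sub, Polynomial.coeff_C_mul,
      Polynomial.coeff_X_pow, Polynomial.coeff_C, Polynomial.coeff_X]
    norm_num
  have hl4 : lam 4 = 4 * (-(a+b+c+d+f)) := by
    rw [hc]
    simp only [Polynomial.coeff_add, Polynomial.coeff_sub, Polynomial.coeff_C_mul,
      Polynomial.coeff_X_pow, Polynomial.coeff_C, Polynomial.coeff_X]
    norm_num
  have hl5 : lam 5 = 4 := by
    rw [hc]
    simp only [Polynomial.coeff_add, Polynomial.coeff_sub, Polynomial.coeff_C_mul,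
      Polynomial.coeff_X_pow, Polynomial.coeff_C, Polynomial.coeff_X]
    norm_num
  rw [hF, Finset.sum_range_succ, Finset.sum_range_succ, Finset.sum_range_one]
  norm_num [hl0, hl1, hl2, hl3, hl4, hl5]
  have h4 : (4 : ℂ) * (a - b)^2 ≠ 0 :=
    mul_ne_zero (by norm_num) (pow_ne_zero _ (sub_ne_zero.mpr hij'))
  rw [eq_div_iff h4]
  ring
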